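/- Fix ξ>0, μ>0, γ>0, ρ>0, κ>0, ν>0, α>1, ω>1 with α+ω = αω, and define Θ = νξ(γ+μ)Q₀ - Q₁, where Q₀ = ακγ and Q₁ = [(γ+μ)(ηκ+μ) + ηκ²](ρ+μ), η = α+ω. If Θ > 0, then there exists β̃ with 0 < β̃ < γ+μ such that for every β ∈ (β̃, γ+μ) the reduced SIRWJS system has, besides the disease free equilibrium, exactly two epidemiologically feasible equilibria, and for β < β̃ the disease free equilibrium is the only epidemiologically feasible equilibrium. If Θ ≤ 0, then for every β with 0 < β < γ+μ (i.e. R₀ < 1) the disease free equilibrium is the only epidemiologically feasible equilibrium. -/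

import Mathlib

/-- The equilibrium equations of the reduced SIRWJS system. -/
def sirwjsEquilibrium (β ξ μ γ ρ κ ν α ω : ℝ) (p : ℝ × ℝ × ℝ × ℝ) : Prop :=
  -β * (p.2.1 + ξ * p.2.2.2) * p.1 + ω * κ * p.2.2.1 + μ * (1 - p.1) = 0 ∧
  β * (p.2.1 + ξ * p.2.2.2) * p.1 - (γ + μ) * p.2.1 = 0 ∧
  α * κ * (1 - p.1 - p.2.1 - p.2.2.1 - p.2.2.2) - ω * κ * p.2.2.1
    - ν * β * (p.2.1 + ξ * p.2.2.2) * p.2.2.1 - μ * p.2.2.1 = 0 ∧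
  ν * β * (p.2.1 + ξ * p.2.2.2) * p.2.2.1 - (μ + ρ) * p.2.2.2 = 0

/-- Membership in the feasible region `D`. -/
def sirwjsFeasible (p : ℝ × ℝ × ℝ × ℝ) : Prop :=
  0 ≤ p.1 ∧ 0 ≤ p.2.1 ∧ 0 ≤ p.2.2.1 ∧ 0 ≤ p.2.2.2 ∧
  p.1 + p.2.1 + p.2.2.1 + p.2.2.2 ≤ 1

set_option maxHeartbeats 1000000

noncomputable def sirwjsW (β ξ μ γ ρ κ ν ω Λ : ℝ) : ℝ :=
  (μ + ρ) * ((Λ + μ) * (γ + μ) - μ * β) /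
    (β * (ω * κ * (μ + ρ) + (Λ + μ) * (γ + μ) * ξ * ν))

noncomputable def sirwjsS (β ξ μ γ ρ κ ν ω Λ : ℝ) : ℝ :=
  (γ + μ) / β - (γ + μ) * ξ * ν * sirwjsW β ξ μ γ ρ κ ν ω Λ / (μ + ρ)

noncomputable def sirwjsPt (β ξ μ γ ρ κ ν ω Λ : ℝ) : ℝ × ℝ × ℝ × ℝ :=
  (sirwjsS β ξ μ γ ρ κ ν ω Λ,
   Λ * sirwjsS β ξ μ γ ρ κ ν ω Λ / (γ + μ),
   sirwjsW β ξ μ γ ρ κ ν ω Λ,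
   ν * Λ * sirwjsW β ξ μ γ ρ κ ν ω Λ / (μ + ρ))

noncomputable def sirwjsQuad (β ξ μ γ ρ κ ν α ω Λ : ℝ) : ℝ :=
  ((γ + μ) * ν * (α * κ + (μ + ρ))) * Λ ^ 2 +
  (((γ + μ) * ((α + ω) * κ + μ) + α * ω * κ ^ 2) * (μ + ρ)
      + μ * ν * (α * κ + (μ + ρ)) * ((γ + μ) - β) - ν * ξ * α * κ * γ * β) * Λ +
  (μ + ρ) * (α * ω * κ ^ 2 + μ * (α + ω) * κ + μ ^ 2) * ((γ + μ) - β)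

lemma sirwjs_key (β ξ μ γ ρ κ ν α ω Λ s w : ℝ)
    (R1 : w * (β * (ω * κ * (μ + ρ) + (Λ + μ) * (γ + μ) * ξ * ν))
        = (μ + ρ) * ((Λ + μ) * (γ + μ) - μ * β))
    (R2 : s * (β * (μ + ρ)) = (γ + μ) * (μ + ρ) - β * ξ * ν * (γ + μ) * w) :
    (α * κ * ((γ + μ) * (μ + ρ) * (1 - s - w) - (μ + ρ) * Λ * s - (γ + μ) * ν * Λ * w)
      - (ω * κ + μ + ν * Λ) * ((γ + μ) * (μ + ρ)) * w)
      * ((β * (μ + ρ)) * (β * (ω * κ * (μ + ρ) + (Λ + μ) * (γ + μ) * ξ * ν)))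
    = -sirwjsQuad β ξ μ γ ρ κ ν α ω Λ * ((γ + μ) * (μ + ρ) * (β * (μ + ρ))) := by
  rw [sirwjsQuad]
  linear_combination
    ((-(α * κ * (γ + μ) * ((μ + ρ) + ν * Λ) + (γ + μ) * (μ + ρ) * (ω * κ + μ + ν * Λ)))
        * (β * (μ + ρ))
      - (-(α * κ * (μ + ρ) * ((γ + μ) + Λ))) * (β * ξ * ν * (γ + μ))) * R1
    + (-(α * κ * (μ + ρ) * ((γ + μ) + Λ)))
        * (β * (ω * κ * (μ + ρ) + (Λ + μ) * (γ + μ) * ξ * ν)) * R2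

lemma sirwjs_lemA (β ξ μ γ ρ κ ν α ω Λ : ℝ)
    (hξ : 0 < ξ) (hμ : 0 < μ) (hγ : 0 < γ) (hρ : 0 < ρ)
    (hκ : 0 < κ) (hν : 0 < ν) (hα : 0 < α) (hω : 0 < ω)
    (hβ0 : 0 < β) (hβG : β < γ + μ) (hΛ : 0 < Λ)
    (hq : sirwjsQuad β ξ μ γ ρ κ ν α ω Λ = 0) :
    sirwjsEquilibrium β ξ μ γ ρ κ ν α ω (sirwjsPt β ξ μ γ ρ κ ν ω Λ) ∧
    sirwjsFeasible (sirwjsPt β ξ μ γ ρ κ ν ω Λ) ∧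
    0 < (sirwjsPt β ξ μ γ ρ κ ν ω Λ).2.1 ∧
    β * ((sirwjsPt β ξ μ γ ρ κ ν ω Λ).2.1
        + ξ * (sirwjsPt β ξ μ γ ρ κ ν ω Λ).2.2.2) = Λ := by
  have hG : (0:ℝ) < γ + μ := by linarith
  have hM : (0:ℝ) < μ + ρ := by linarith
  have hden : 0 < β * (ω * κ * (μ + ρ) + (Λ + μ) * (γ + μ) * ξ * ν) := by positivity
  have hdne := ne_of_gt hden
  have hGne := ne_of_gt hG
  have hMne := ne_of_gt hM
  have hβne := ne_of_gt hβ0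
  set w := sirwjsW β ξ μ γ ρ κ ν ω Λ with hw
  set s := sirwjsS β ξ μ γ ρ κ ν ω Λ with hs
  have R1 : w * (β * (ω * κ * (μ + ρ) + (Λ + μ) * (γ + μ) * ξ * ν))
      = (μ + ρ) * ((Λ + μ) * (γ + μ) - μ * β) := by
    rw [hw, sirwjsW]; field_simp
  have R2 : s * (β * (μ + ρ)) = (γ + μ) * (μ + ρ) - β * ξ * ν * (γ + μ) * w := by
    rw [hs, sirwjsS]; field_simp; ring
  have hnum : 0 < (μ + ρ) * ((Λ + μ) * (γ + μ) - μ * β) := by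
    have h1 : μ * β < (Λ + μ) * (γ + μ) := by nlinarith [mul_pos hΛ hG]
    have h2 : 0 < (Λ + μ) * (γ + μ) - μ * β := by linarith
    exact mul_pos hM h2
  have hwpos : 0 < w := by
    rw [hw, sirwjsW]; exact div_pos hnum hden
  -- identity (a): force of infection equals Λ
  have hiaM : β * (Λ * s * (μ + ρ) + ξ * ν * Λ * w * (γ + μ))
      = Λ * ((γ + μ) * (μ + ρ)) := by linear_combination Λ * R2
  have hia : β * (Λ * s / (γ + μ) + ξ * (ν * Λ * w / (μ + ρ))) = Λ := by
    field_simp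
    linear_combination R2
  -- identity (b): ω κ w = (Λ + μ) s - μ
  have hibM : ω * κ * w * (β * (μ + ρ)) = ((Λ + μ) * s - μ) * (β * (μ + ρ)) := by
    linear_combination R1 - (Λ + μ) * R2
  have hib : ω * κ * w = (Λ + μ) * s - μ :=
    mul_right_cancel₀ (by positivity) hibM
  have hspos : 0 < s := by nlinarith [mul_pos (mul_pos hω hκ) hwpos]
  have hipos : 0 < Λ * s / (γ + μ) := by positivity
  have hjpos : 0 < ν * Λ * w / (μ + ρ) := by positivity
  -- eq3
  have hkey := sirwjs_key β ξ μ γ ρ κ ν α ω Λ s w R1 R2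
  rw [hq] at hkey
  have hE30 : α * κ * ((γ + μ) * (μ + ρ) * (1 - s - w) - (μ + ρ) * Λ * s
      - (γ + μ) * ν * Λ * w) - (ω * κ + μ + ν * Λ) * ((γ + μ) * (μ + ρ)) * w = 0 := by
    have h2 : (0:ℝ) < β * (μ + ρ) * (β * (ω * κ * (μ + ρ) + (Λ + μ) * (γ + μ) * ξ * ν)) := by
      positivity
    have h3 : -(0:ℝ) * ((γ + μ) * (μ + ρ) * (β * (μ + ρ))) = 0 := by ring
    rw [h3] at hkey
    exact (mul_eq_zero.mp hkey).resolve_right (ne_of_gt h2)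
  have he3 : α * κ * (1 - s - Λ * s / (γ + μ) - w - ν * Λ * w / (μ + ρ))
      - ω * κ * w - ν * Λ * w - μ * w = 0 := by
    have hmul : (α * κ * (1 - s - Λ * s / (γ + μ) - w - ν * Λ * w / (μ + ρ))
        - ω * κ * w - ν * Λ * w - μ * w) * ((γ + μ) * (μ + ρ))
        = α * κ * ((γ + μ) * (μ + ρ) * (1 - s - w) - (μ + ρ) * Λ * s
          - (γ + μ) * ν * Λ * w) - (ω * κ + μ + ν * Λ) * ((γ + μ) * (μ + ρ)) * w := by
      field_simp
      ring
    have := hmul.trans hE30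
    rcases mul_eq_zero.mp this with h | h
    · exact h
    · exact absurd h (by positivity)
  refine ⟨⟨?_, ?_, ?_, ?_⟩, ⟨le_of_lt hspos, le_of_lt hipos, le_of_lt hwpos, le_of_lt hjpos, ?_⟩,
      hipos, hia⟩
  · show -β * (Λ * s / (γ + μ) + ξ * (ν * Λ * w / (μ + ρ))) * s + ω * κ * w + μ * (1 - s) = 0
    have h2 : -β * (Λ * s / (γ + μ) + ξ * (ν * Λ * w / (μ + ρ))) * s = -(Λ * s) := by
      rw [show -β * (Λ * s / (γ + μ) + ξ * (ν * Λ * w / (μ + ρ))) * s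
          = -(β * (Λ * s / (γ + μ) + ξ * (ν * Λ * w / (μ + ρ))) * s) by ring, hia]
    rw [h2]; linarith [hib]
  · show β * (Λ * s / (γ + μ) + ξ * (ν * Λ * w / (μ + ρ))) * s
        - (γ + μ) * (Λ * s / (γ + μ)) = 0
    rw [show β * (Λ * s / (γ + μ) + ξ * (ν * Λ * w / (μ + ρ))) * s
        = (β * (Λ * s / (γ + μ) + ξ * (ν * Λ * w / (μ + ρ)))) * s by ring, hia]
    field_simp
    ring
  · show α * κ * (1 - s - Λ * s / (γ + μ) - w - ν * Λ * w / (μ + ρ)) - ω * κ * w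
        - ν * β * (Λ * s / (γ + μ) + ξ * (ν * Λ * w / (μ + ρ))) * w - μ * w = 0
    rw [show ν * β * (Λ * s / (γ + μ) + ξ * (ν * Λ * w / (μ + ρ))) * w
        = ν * (β * (Λ * s / (γ + μ) + ξ * (ν * Λ * w / (μ + ρ)))) * w by ring, hia]
    linarith [he3]
  · show ν * β * (Λ * s / (γ + μ) + ξ * (ν * Λ * w / (μ + ρ))) * w
        - (μ + ρ) * (ν * Λ * w / (μ + ρ)) = 0
    rw [show ν * β * (Λ * s / (γ + μ) + ξ * (ν * Λ * w / (μ + ρ))) * w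
        = ν * (β * (Λ * s / (γ + μ) + ξ * (ν * Λ * w / (μ + ρ)))) * w by ring, hia]
    field_simp
    ring
  · -- sum ≤ 1
    show s + Λ * s / (γ + μ) + w + ν * Λ * w / (μ + ρ) ≤ 1
    have h1 : α * κ * (1 - s - Λ * s / (γ + μ) - w - ν * Λ * w / (μ + ρ))
        = ω * κ * w + ν * Λ * w + μ * w := by linarith [he3]
    have h4 : (0:ℝ) < α * κ := mul_pos hα hκ
    have hY : 1 - s - Λ * s / (γ + μ) - w - ν * Λ * w / (μ + ρ)
        = (ω * κ * w + ν * Λ * w + μ * w) / (α * κ) := by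
      rw [eq_div_iff (ne_of_gt h4)]; linarith [h1]
    have h5 : 0 < 1 - s - Λ * s / (γ + μ) - w - ν * Λ * w / (μ + ρ) := by
      rw [hY]; positivity
    linarith [h5]

lemma sirwjs_lemB (β ξ μ γ ρ κ ν α ω : ℝ)
    (hξ : 0 < ξ) (hμ : 0 < μ) (hγ : 0 < γ) (hρ : 0 < ρ)
    (hκ : 0 < κ) (hν : 0 < ν) (hα : 0 < α) (hω : 0 < ω)
    (hβ0 : 0 < β) (r : ℝ × ℝ × ℝ × ℝ)
    (he : sirwjsEquilibrium β ξ μ γ ρ κ ν α ω r) (hf : sirwjsFeasible r) :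
    r = (1, 0, 0, 0) ∨ ∃ Λ : ℝ, 0 < Λ ∧ sirwjsQuad β ξ μ γ ρ κ ν α ω Λ = 0 ∧
      r = sirwjsPt β ξ μ γ ρ κ ν ω Λ := by
  have hG : (0:ℝ) < γ + μ := by linarith
  have hM : (0:ℝ) < μ + ρ := by linarith
  have hGne := ne_of_gt hG
  have hMne := ne_of_gt hM
  have hβne := ne_of_gt hβ0
  obtain ⟨s, i, w, j⟩ := r
  obtain ⟨he1, he2, he3, he4⟩ := he
  obtain ⟨hs0, hi0, hw0, hj0, hsum⟩ := hf
  simp only at he1 he2 he3 he4 hs0 hi0 hw0 hj0 hsum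
  have hΛ0 : 0 ≤ β * (i + ξ * j) := by positivity
  rcases eq_or_lt_of_le hΛ0 with hΛz | hΛp
  · -- Λ = 0 : disease free equilibrium
    left
    have hij : i + ξ * j = 0 := by
      rcases mul_eq_zero.mp hΛz.symm with h | h
      · exact absurd h hβne
      · exact h
    have hj' : j = 0 := by nlinarith
    have hi' : i = 0 := by nlinarith
    rw [hi', hj'] at he1 hsum
    have he1' : ω * κ * w + μ * (1 - s) = 0 := by linear_combination he1
    have h1s : 0 ≤ 1 - s := by linarith
    have hwle : ω * κ * w ≤ 0 := by nlinarith [mul_nonneg hμ.le h1s]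
    have hw' : w = 0 :=
      le_antisymm (by nlinarith [mul_pos hω hκ]) hw0
    have h1 : μ * (1 - s) = 0 := by rw [hw'] at he1'; linarith
    have hs' : s = 1 := by
      have h2 : 1 - s = 0 := (mul_eq_zero.mp h1).resolve_left (ne_of_gt hμ)
      linarith
    simp [hs', hi', hw', hj', Prod.ext_iff]
  · right
    obtain ⟨Λ, hΛdef⟩ : ∃ Λ : ℝ, Λ = β * (i + ξ * j) := ⟨_, rfl⟩
    have hΛpos : 0 < Λ := hΛdef ▸ hΛp
    have hΛne := ne_of_gt hΛpos
    have hΛμ : 0 < Λ + μ := by linarith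
    have hden : 0 < β * (ω * κ * (μ + ρ) + (Λ + μ) * (γ + μ) * ξ * ν) := by positivity
    have hA : ω * κ * w = (Λ + μ) * s - μ := by rw [hΛdef]; linear_combination he1
    have hB : (γ + μ) * i = Λ * s := by rw [hΛdef]; linear_combination -he2
    have hC : (μ + ρ) * j = ν * Λ * w := by rw [hΛdef]; linear_combination -he4
    have hD1 : Λ * ((γ + μ) * (μ + ρ)) = Λ * (β * ((μ + ρ) * s + ξ * ν * (γ + μ) * w)) := by
      rw [hΛdef]
      linear_combination (-(β * (μ + ρ))) * he2 + (-(β * ξ * (γ + μ))) * he4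
    have hE : (γ + μ) * (μ + ρ) = β * ((μ + ρ) * s + ξ * ν * (γ + μ) * w) :=
      mul_left_cancel₀ hΛne hD1
    have R2 : s * (β * (μ + ρ)) = (γ + μ) * (μ + ρ) - β * ξ * ν * (γ + μ) * w := by
      linear_combination -hE
    have R1 : w * (β * (ω * κ * (μ + ρ) + (Λ + μ) * (γ + μ) * ξ * ν))
        = (μ + ρ) * ((Λ + μ) * (γ + μ) - μ * β) := by
      linear_combination (β * (μ + ρ)) * hA + (Λ + μ) * R2
    have hE3 : α * κ * ((γ + μ) * (μ + ρ) * (1 - s - w) - (μ + ρ) * Λ * s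
        - (γ + μ) * ν * Λ * w) - (ω * κ + μ + ν * Λ) * ((γ + μ) * (μ + ρ)) * w = 0 := by
      linear_combination ((γ + μ) * (μ + ρ)) * he3 + (α * κ * (μ + ρ)) * hB
        + (α * κ * (γ + μ)) * hC - ν * w * (γ + μ) * (μ + ρ) * hΛdef
    have hQ : sirwjsQuad β ξ μ γ ρ κ ν α ω Λ = 0 := by
      have hkey := sirwjs_key β ξ μ γ ρ κ ν α ω Λ s w R1 R2
      rw [hE3, zero_mul] at hkey
      have h3 : (0:ℝ) < (γ + μ) * (μ + ρ) * (β * (μ + ρ)) := by positivity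
      rcases mul_eq_zero.mp hkey.symm with h | h
      · linarith
      · exact absurd h (ne_of_gt h3)
    have hwv : w = sirwjsW β ξ μ γ ρ κ ν ω Λ := by
      rw [sirwjsW, eq_div_iff (ne_of_gt hden)]; exact R1
    have hsv : s = sirwjsS β ξ μ γ ρ κ ν ω Λ := by
      have h4 : s = ((γ + μ) * (μ + ρ) - β * ξ * ν * (γ + μ) * w) / (β * (μ + ρ)) := by
        rw [eq_div_iff (by positivity : β * (μ + ρ) ≠ 0)]; exact R2
      rw [sirwjsS, ← hwv, h4]
      field_simp
    refine ⟨Λ, hΛpos, hQ, ?_⟩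
    simp only [sirwjsPt, Prod.mk.injEq]
    refine ⟨hsv, ?_, hwv, ?_⟩
    · rw [← hsv, eq_div_iff hGne]; linear_combination hB
    · rw [← hwv, eq_div_iff hMne]; linear_combination hC

/-- Theorem 3.1 of the paper: if `Θ = νξ(γ+μ)Q₀ - Q₁ > 0`, there is a critical
`β̃ ∈ (0, γ+μ)` such that for `β ∈ (β̃, γ+μ)` the reduced SIRWJS system has
exactly two epidemiologically feasible equilibria besides the DFE, and for
`β < β̃` only the DFE; if `Θ ≤ 0`, then for all `β < γ+μ` (i.e. `R₀ < 1`)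
the DFE is the only epidemiologically feasible equilibrium. -/
theorem sirwjs_backward_bifurcation_equilibria
    (ξ μ γ ρ κ ν α ω : ℝ)
    (hξ : 0 < ξ) (hμ : 0 < μ) (hγ : 0 < γ) (hρ : 0 < ρ)
    (hκ : 0 < κ) (hν : 0 < ν) (hα : 1 < α) (hω : 1 < ω)
    (hαω : α + ω = α * ω)
    (η Q₀ Q₁ Θ : ℝ)
    (hη : η = α + ω)
    (hQ₀ : Q₀ = α * κ * γ)
    (hQ₁ : Q₁ = ((γ + μ) * (η * κ + μ) + η * κ ^ 2) * (ρ + μ))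
    (hΘ : Θ = ν * ξ * (γ + μ) * Q₀ - Q₁) :
    (0 < Θ → ∃ βc : ℝ, 0 < βc ∧ βc < γ + μ ∧
      (∀ β : ℝ, βc < β → β < γ + μ →
        ∃ p q : ℝ × ℝ × ℝ × ℝ, p ≠ q ∧ p ≠ (1, 0, 0, 0) ∧ q ≠ (1, 0, 0, 0) ∧
          sirwjsEquilibrium β ξ μ γ ρ κ ν α ω p ∧ sirwjsFeasible p ∧
          sirwjsEquilibrium β ξ μ γ ρ κ ν α ω q ∧ sirwjsFeasible q ∧
          (∀ r : ℝ × ℝ × ℝ × ℝ,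
            sirwjsEquilibrium β ξ μ γ ρ κ ν α ω r → sirwjsFeasible r →
            r = (1, 0, 0, 0) ∨ r = p ∨ r = q)) ∧
      (∀ β : ℝ, 0 < β → β < βc →
        ∀ p : ℝ × ℝ × ℝ × ℝ,
          sirwjsEquilibrium β ξ μ γ ρ κ ν α ω p → sirwjsFeasible p →
          p = (1, 0, 0, 0))) ∧
    (Θ ≤ 0 → ∀ β : ℝ, 0 < β → β < γ + μ →
      ∀ p : ℝ × ℝ × ℝ × ℝ,
        sirwjsEquilibrium β ξ μ γ ρ κ ν α ω p → sirwjsFeasible p →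
        p = (1, 0, 0, 0)) := by
  have hα0 : (0:ℝ) < α := by linarith
  have hω0 : (0:ℝ) < ω := by linarith
  have hG : (0:ℝ) < γ + μ := by linarith
  have hM : (0:ℝ) < μ + ρ := by linarith
  obtain ⟨A, hAdef⟩ : ∃ x : ℝ, x = (γ + μ) * ν * (α * κ + (μ + ρ)) := ⟨_, rfl⟩
  obtain ⟨b1, hb1def⟩ : ∃ x : ℝ, x = ν * ξ * α * κ * γ + μ * ν * (α * κ + (μ + ρ)) := ⟨_, rfl⟩
  obtain ⟨b0, hb0def⟩ : ∃ x : ℝ,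
      x = ((γ + μ) * ((α + ω) * κ + μ) + α * ω * κ ^ 2) * (μ + ρ)
        + μ * ν * (α * κ + (μ + ρ)) * (γ + μ) := ⟨_, rfl⟩
  obtain ⟨c1, hc1def⟩ : ∃ x : ℝ,
      x = (μ + ρ) * (α * ω * κ ^ 2 + μ * (α + ω) * κ + μ ^ 2) := ⟨_, rfl⟩
  have hApos : 0 < A := by rw [hAdef]; positivity
  have hb1pos : 0 < b1 := by rw [hb1def]; positivity
  have hb0pos : 0 < b0 := by rw [hb0def]; positivity
  have hc1pos : 0 < c1 := by rw [hc1def]; positivity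
  have hquad_ab : ∀ β Λ : ℝ, sirwjsQuad β ξ μ γ ρ κ ν α ω Λ
      = A * Λ ^ 2 + (b0 - b1 * β) * Λ + c1 * ((γ + μ) - β) := by
    intro β Λ
    rw [sirwjsQuad, hAdef, hb1def, hb0def, hc1def]; ring
  have hbG : b1 * (γ + μ) = b0 + Θ := by
    rw [hb1def, hb0def, hΘ, hQ₁, hQ₀, hη]
    linear_combination ((μ + ρ) * κ ^ 2) * hαω
  -- helper: no endemic equilibrium when b ≥ 0 and β < γ+μ
  have hno : ∀ β : ℝ, 0 < β → β < γ + μ → 0 ≤ b0 - b1 * β →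
      ∀ r : ℝ × ℝ × ℝ × ℝ, sirwjsEquilibrium β ξ μ γ ρ κ ν α ω r → sirwjsFeasible r →
      r = (1, 0, 0, 0) := by
    intro β hβ0 hβG hb r her hfr
    rcases sirwjs_lemB β ξ μ γ ρ κ ν α ω hξ hμ hγ hρ hκ hν hα0 hω0 hβ0 r her hfr with
      h | ⟨Λ, hΛpos, hQ, _⟩
    · exact h
    · exfalso
      rw [hquad_ab] at hQ
      have h1 : 0 < A * Λ ^ 2 := by positivity
      have h2 : 0 ≤ (b0 - b1 * β) * Λ := mul_nonneg hb hΛpos.le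
      have h3 : 0 < c1 * ((γ + μ) - β) := by
        apply mul_pos hc1pos; linarith
      linarith
  constructor
  · -- backward bifurcation branch
    intro hΘpos
    obtain ⟨R, hRdef⟩ : ∃ x : ℝ, x = Real.sqrt (A * c1 * (A * c1 + b1 * Θ)) := ⟨_, rfl⟩
    have hArg : 0 < A * c1 * (A * c1 + b1 * Θ) := by
      have h0 : 0 < A * c1 + b1 * Θ := by positivity
      positivity
    have hRpos : 0 < R := by rw [hRdef]; exact Real.sqrt_pos.mpr hArg
    have hR2 : R ^ 2 = A * c1 * (A * c1 + b1 * Θ) := by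
      rw [hRdef, sq, Real.mul_self_sqrt hArg.le]
    have hRA : A * c1 < R := by
      rw [hRdef]
      rw [show A * c1 * (A * c1 + b1 * Θ) = (A*c1)^2 + (A*c1)*(b1*Θ) by ring]
      have h1 : 0 < (A*c1)*(b1*Θ) := mul_pos (mul_pos hApos hc1pos) (mul_pos hb1pos hΘpos)
      have h2 : (A*c1)^2 < (A*c1)^2 + (A*c1)*(b1*Θ) := by linarith
      exact (Real.lt_sqrt (by positivity)).mpr h2
    obtain ⟨βc, hβcdef⟩ : ∃ x : ℝ, x = (b0 * b1 - 2 * A * c1 + 2 * R) / b1 ^ 2 := ⟨_, rfl⟩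
    have hβceq : βc * b1 ^ 2 = b0 * b1 - 2 * A * c1 + 2 * R := by
      rw [hβcdef, div_mul_cancel₀]
      positivity
    have hβcpos : 0 < βc := by
      have h1 : 0 < βc * b1 ^ 2 := by
        rw [hβceq]; linarith [mul_pos hb0pos hb1pos, hRA]
      rcases mul_pos_iff.mp h1 with ⟨h2, _⟩ | ⟨_, h3⟩
      · exact h2
      · exact absurd h3 (sq_nonneg b1).not_gt
    have h2R : 2 * R < b1 * Θ + 2 * A * c1 := by
      have hbt : 0 < b1 * Θ := mul_pos hb1pos hΘpos
      have hsq : (2 * R) ^ 2 < (b1 * Θ + 2 * A * c1) ^ 2 := by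
        have h3 : 0 < (b1 * Θ) * (b1 * Θ) := mul_pos hbt hbt
        linarith [hR2, h3]
      have h4 : (0:ℝ) ≤ b1 * Θ + 2 * A * c1 := by positivity
      exact lt_of_pow_lt_pow_left₀ 2 h4 hsq
    have hβcG : βc < γ + μ := by
      have h1 : βc * b1 ^ 2 < (γ + μ) * b1 ^ 2 := by
        rw [hβceq]
        have h2 : (γ + μ) * b1 ^ 2 = b0 * b1 + b1 * Θ := by linear_combination b1 * hbG
        linarith [h2R]
      exact lt_of_mul_lt_mul_right h1 (by positivity)
    -- discriminant identity
    have hid : ∀ β : ℝ, ((b0 - b1 * β) ^ 2 - 4 * A * (c1 * ((γ + μ) - β))) * b1 ^ 2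
        = (b1 ^ 2 * β - (b0 * b1 - 2 * A * c1 + 2 * R)) ^ 2
          + 4 * R * (b1 ^ 2 * β - (b0 * b1 - 2 * A * c1 + 2 * R)) := by
      intro β
      linear_combination 4 * hR2 - (4 * A * c1 * b1) * hbG
    refine ⟨βc, hβcpos, hβcG, ?_, ?_⟩
    · -- two endemic equilibria for βc < β < γ+μ
      intro β hβc hβG
      have hβ0 : 0 < β := by linarith
      have hbb : βc * b1 ^ 2 < β * b1 ^ 2 :=
        mul_lt_mul_of_pos_right hβc (by positivity)
      have hupos : 0 < b1 ^ 2 * β - (b0 * b1 - 2 * A * c1 + 2 * R) := by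
        rw [← hβceq]; linarith [hbb]
      have hbneg : b0 - b1 * β < 0 := by
        have h5 : b0 * b1 < (b1 * β) * b1 := by linarith [hβceq, hbb, hRA]
        have h6 := lt_of_mul_lt_mul_right h5 hb1pos.le
        linarith
      have hcpos : 0 < c1 * ((γ + μ) - β) := by
        apply mul_pos hc1pos; linarith
      have hDpos : 0 < (b0 - b1 * β) ^ 2 - 4 * A * (c1 * ((γ + μ) - β)) := by
        have h1 : 0 < ((b0 - b1 * β) ^ 2 - 4 * A * (c1 * ((γ + μ) - β))) * b1 ^ 2 := by
          rw [hid β]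
          linarith [mul_pos hRpos hupos,
            sq_nonneg (b1 ^ 2 * β - (b0 * b1 - 2 * A * c1 + 2 * R))]
        rcases mul_pos_iff.mp h1 with ⟨h2, _⟩ | ⟨_, h3⟩
        · exact h2
        · exact absurd h3 (sq_nonneg b1).not_gt
      obtain ⟨d, hddef⟩ : ∃ x : ℝ,
          x = Real.sqrt ((b0 - b1 * β) ^ 2 - 4 * A * (c1 * ((γ + μ) - β))) := ⟨_, rfl⟩
      have hd2 : d ^ 2 = (b0 - b1 * β) ^ 2 - 4 * A * (c1 * ((γ + μ) - β)) := by
        rw [hddef, sq, Real.mul_self_sqrt hDpos.le]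
      have hdpos : 0 < d := by rw [hddef]; exact Real.sqrt_pos.mpr hDpos
      obtain ⟨Λp, hΛpdef⟩ : ∃ x : ℝ, x = (-(b0 - b1 * β) + d) / (2 * A) := ⟨_, rfl⟩
      obtain ⟨Λm, hΛmdef⟩ : ∃ x : ℝ, x = (-(b0 - b1 * β) - d) / (2 * A) := ⟨_, rfl⟩
      have hΛp2A : Λp * (2 * A) = -(b0 - b1 * β) + d := by
        rw [hΛpdef, div_mul_cancel₀]; positivity
      have hΛm2A : Λm * (2 * A) = -(b0 - b1 * β) - d := by
        rw [hΛmdef, div_mul_cancel₀]; positivity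
      have hdb : d < -(b0 - b1 * β) := by
        have h1 : d ^ 2 < (-(b0 - b1 * β)) ^ 2 := by
          have h2 := mul_pos hApos hcpos
          have h3 : (-(b0 - b1 * β)) ^ 2 = (b0 - b1 * β) ^ 2 := by ring
          linarith [hd2, h2, h3]
        exact lt_of_pow_lt_pow_left₀ 2 (by linarith [hbneg]) h1
      have hΛmpos : 0 < Λm := by
        have h1 : 0 < Λm * (2 * A) := by rw [hΛm2A]; linarith
        rcases mul_pos_iff.mp h1 with ⟨h2, _⟩ | ⟨_, h3⟩
        · exact h2
        · linarith
      have hΛppos : 0 < Λp := by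
        have h1 : 0 < Λp * (2 * A) := by rw [hΛp2A]; linarith
        rcases mul_pos_iff.mp h1 with ⟨h2, _⟩ | ⟨_, h3⟩
        · exact h2
        · linarith
      have hΛmp : Λm < Λp := by
        have h1 : Λm * (2 * A) < Λp * (2 * A) := by rw [hΛp2A, hΛm2A]; linarith
        exact lt_of_mul_lt_mul_right h1 (by positivity)
      have hqp : sirwjsQuad β ξ μ γ ρ κ ν α ω Λp = 0 := by
        rw [hquad_ab]
        have h4 : (A * Λp ^ 2 + (b0 - b1 * β) * Λp + c1 * ((γ + μ) - β)) * (4 * A)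
            = (Λp * (2 * A)) ^ 2 + 2 * (b0 - b1 * β) * (Λp * (2 * A))
              + 4 * A * (c1 * ((γ + μ) - β)) := by ring
        have h5 : (Λp * (2 * A)) ^ 2 + 2 * (b0 - b1 * β) * (Λp * (2 * A))
            + 4 * A * (c1 * ((γ + μ) - β)) = 0 := by
          rw [hΛp2A]; linear_combination hd2
        rcases mul_eq_zero.mp (h4.trans h5) with h | h
        · exact h
        · exact absurd h (by positivity)
      have hqm : sirwjsQuad β ξ μ γ ρ κ ν α ω Λm = 0 := by
        rw [hquad_ab]
        have h4 : (A * Λm ^ 2 + (b0 - b1 * β) * Λm + c1 * ((γ + μ) - β)) * (4 * A)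
            = (Λm * (2 * A)) ^ 2 + 2 * (b0 - b1 * β) * (Λm * (2 * A))
              + 4 * A * (c1 * ((γ + μ) - β)) := by ring
        have h5 : (Λm * (2 * A)) ^ 2 + 2 * (b0 - b1 * β) * (Λm * (2 * A))
            + 4 * A * (c1 * ((γ + μ) - β)) = 0 := by
          rw [hΛm2A]; linear_combination hd2
        rcases mul_eq_zero.mp (h4.trans h5) with h | h
        · exact h
        · exact absurd h (by positivity)
      obtain ⟨heqp, hfep, hip, hlamp⟩ := sirwjs_lemA β ξ μ γ ρ κ ν α ω Λp
        hξ hμ hγ hρ hκ hν hα0 hω0 hβ0 hβG hΛppos hqp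
      obtain ⟨heqm, hfem, him, hlamm⟩ := sirwjs_lemA β ξ μ γ ρ κ ν α ω Λm
        hξ hμ hγ hρ hκ hν hα0 hω0 hβ0 hβG hΛmpos hqm
      refine ⟨sirwjsPt β ξ μ γ ρ κ ν ω Λp, sirwjsPt β ξ μ γ ρ κ ν ω Λm,
        ?_, ?_, ?_, heqp, hfep, heqm, hfem, ?_⟩
      · intro h
        rw [h] at hlamp
        have h1 : Λm = Λp := hlamm.symm.trans hlamp
        linarith
      · intro h
        rw [h] at hip
        simp at hip
      · intro h
        rw [h] at him
        simp at him
      · intro r her hfr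
        rcases sirwjs_lemB β ξ μ γ ρ κ ν α ω hξ hμ hγ hρ hκ hν hα0 hω0 hβ0 r her hfr with
          h | ⟨Λ, hΛpos, hQr, hr⟩
        · exact Or.inl h
        · rw [hquad_ab] at hQr
          have hfac : (Λ * (2 * A) - Λp * (2 * A)) * (Λ * (2 * A) - Λm * (2 * A)) = 0 := by
            rw [hΛp2A, hΛm2A]
            linear_combination (4 * A) * hQr - hd2
          rcases mul_eq_zero.mp hfac with h1 | h1
          · right; left
            have h2 : Λ = Λp := by
              have h3 := sub_eq_zero.mp h1
              have h4 : (0:ℝ) < 2 * A := by positivity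
              exact mul_right_cancel₀ (ne_of_gt h4) h3
            rw [hr, h2]
          · right; right
            have h2 : Λ = Λm := by
              have h3 := sub_eq_zero.mp h1
              have h4 : (0:ℝ) < 2 * A := by positivity
              exact mul_right_cancel₀ (ne_of_gt h4) h3
            rw [hr, h2]
    · -- only DFE for 0 < β < βc
      intro β hβ0 hββc p hep hfp
      rcases le_or_gt (b1 * β) b0 with hble | hbgt
      · exact hno β hβ0 (by linarith) (by linarith) p hep hfp
      · rcases sirwjs_lemB β ξ μ γ ρ κ ν α ω hξ hμ hγ hρ hκ hν hα0 hω0 hβ0 p hep hfp with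
          h | ⟨Λ, hΛpos, hQ, _⟩
        · exact h
        · exfalso
          rw [hquad_ab] at hQ
          have hbb : β * b1 ^ 2 < βc * b1 ^ 2 :=
            mul_lt_mul_of_pos_right hββc (by positivity)
          have huneg : b1 ^ 2 * β - (b0 * b1 - 2 * A * c1 + 2 * R) < 0 := by
            rw [← hβceq]; linarith [hbb]
          have hu4R : 0 < b1 ^ 2 * β - (b0 * b1 - 2 * A * c1 + 2 * R) + 4 * R := by
            linarith [mul_lt_mul_of_pos_left hbgt hb1pos, mul_pos hApos hc1pos, hRpos]
          have hDneg : (b0 - b1 * β) ^ 2 - 4 * A * (c1 * ((γ + μ) - β)) < 0 := by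
            have h1 : ((b0 - b1 * β) ^ 2 - 4 * A * (c1 * ((γ + μ) - β))) * b1 ^ 2 < 0 := by
              rw [hid β]
              have h9 := mul_neg_of_neg_of_pos huneg hu4R
              linarith [h9]
            by_contra hcon
            push_neg at hcon
            have h2 := mul_nonneg hcon (sq_nonneg b1)
            linarith
          have hsq : (2 * A * Λ + (b0 - b1 * β)) ^ 2
              = (b0 - b1 * β) ^ 2 - 4 * A * (c1 * ((γ + μ) - β)) := by
            linear_combination (4 * A) * hQ
          linarith [sq_nonneg (2 * A * Λ + (b0 - b1 * β))]
  · -- forward bifurcation branch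
    intro hΘneg β hβ0 hβG p hep hfp
    have hb : 0 ≤ b0 - b1 * β := by
      have h1 := mul_pos hb1pos (sub_pos.mpr hβG)
      have h2 : b1 * (γ + μ - β) = b0 + Θ - b1 * β := by linear_combination hbG
      linarith [h1, h2]
    exact hno β hβ0 hβG hb p hep hfp
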